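/- Inverse approximation theorem (analytic core): suppose h̃ ∈ C[-b,b] and there exist polynomials P_n of degree ≤ n with ‖h̃ − P_n‖_∞ ≤ M̃/n^{r+ε} for all n ≥ 1, where r ∈ ℕ, M̃, ε > 0. Then h̃ ∈ C^r(-b,b): on every compact subinterval [-d,d] ⊂ (-b,b), the telescoping series P_1 + ∑_{k≥0}(P_{2^{k+1}} − P_{2^k}) converges in C^r([-d,d]) norm to h̃, using Bernstein's inequality |P_n'(x)| ≤ n‖P_n‖/√(b²−x²). -/

import Mathlib

open Polynomial Finset Filter



lemma aux_coeff_bound (G : Polynomial ℂ) {δ B : ℝ} (hδ : 0 < δ)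
    (h : ∀ u : ℂ, ‖u‖ = δ → ‖G.eval u‖ ≤ B) (j : ℕ) :
    ‖G.coeff j‖ * δ ^ j ≤ B := by
  set N : ℕ := max (G.natDegree + 1) (j + 1) with hNdef
  have hjN : j < N := lt_of_lt_of_le (Nat.lt_succ_self j) (le_max_right _ _)
  have hdN : G.natDegree < N := lt_of_lt_of_le (Nat.lt_succ_self _) (le_max_left _ _)
  have hN0 : N ≠ 0 := by omega
  set ζ : ℂ := Complex.exp (2 * Real.pi * Complex.I / N) with hζdef
  have hζ : IsPrimitiveRoot ζ N := Complex.isPrimitiveRoot_exp N hN0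
  have hζN : ζ ^ N = 1 := hζ.pow_eq_one
  have hζnorm : ‖ζ‖ = 1 := by
    have h1 : ‖ζ‖ ^ N = 1 := by rw [← norm_pow, hζN, norm_one]
    rcases (pow_eq_one_iff_of_ne_zero hN0).1 h1 with h2 | h2
    · exact h2
    · nlinarith [norm_nonneg ζ, h2.1]
  -- inner geometric sums
  have inner : ∀ m ∈ range N, (∑ k ∈ range N, (ζ ^ (m + (N - j))) ^ k)
      = if m = j then (N : ℂ) else 0 := by
    intro m hm
    rcases eq_or_ne m j with heq | hmj
    · rw [if_pos heq, heq]
      have hNj : j + (N - j) = N := by omega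
      simp [hNj, hζN]
    · rw [if_neg hmj]
      have hmN : m < N := mem_range.1 hm
      have hne : ζ ^ (m + (N - j)) ≠ 1 := by
        intro h1
        rw [hζ.pow_eq_one_iff_dvd] at h1
        obtain ⟨c, hc⟩ := h1
        rcases c with _ | c
        · omega
        · rcases c with _ | c
          · omega
          · have h2 : N * 2 ≤ N * (c + 1 + 1) := Nat.mul_le_mul_left N (by omega)
            omega
      rw [geom_sum_eq hne, ← pow_mul, mul_comm (m + (N - j)) N, pow_mul, hζN, one_pow,
        sub_self, zero_div]
  -- main identity
  have key : ∑ k ∈ range N, G.eval ((δ : ℂ) * ζ ^ k) * ζ ^ (k * (N - j))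
      = (N : ℂ) * (G.coeff j * (δ : ℂ) ^ j) := by
    have expand : ∀ k, G.eval ((δ : ℂ) * ζ ^ k) * ζ ^ (k * (N - j))
        = ∑ m ∈ range N, G.coeff m * (δ : ℂ) ^ m * (ζ ^ (m + (N - j))) ^ k := by
      intro k
      rw [Polynomial.eval_eq_sum_range' hdN, Finset.sum_mul]
      refine Finset.sum_congr rfl fun m _ => ?_
      rw [mul_pow, ← pow_mul ζ k m, ← pow_mul ζ (m + (N - j)) k, Nat.add_mul, pow_add,
        Nat.mul_comm k m]
      ring
    simp_rw [expand]
    rw [Finset.sum_comm]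
    have : ∀ m ∈ range N, ∑ k ∈ range N, G.coeff m * (δ : ℂ) ^ m * (ζ ^ (m + (N - j))) ^ k
        = G.coeff m * (δ : ℂ) ^ m * (if m = j then (N : ℂ) else 0) := by
      intro m hm
      rw [← Finset.mul_sum, inner m hm]
    rw [Finset.sum_congr rfl this]
    simp [Finset.sum_ite_eq' (range N) j, hjN, mul_comm]
  -- norm bound
  have hB0 : 0 ≤ B := by
    have := h (δ : ℂ) (by simp [abs_of_pos hδ])
    exact le_trans (norm_nonneg _) this
  have hbound : ‖(N : ℂ) * (G.coeff j * (δ : ℂ) ^ j)‖ ≤ N * B := by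
    rw [← key]
    refine le_trans (norm_sum_le _ _) ?_
    have : ∀ k ∈ range N, ‖G.eval ((δ : ℂ) * ζ ^ k) * ζ ^ (k * (N - j))‖ ≤ B := by
      intro k _
      rw [norm_mul, norm_pow, hζnorm, one_pow, mul_one]
      exact h _ (by rw [norm_mul, norm_pow, hζnorm, one_pow, mul_one,
        Complex.norm_real, Real.norm_eq_abs, abs_of_pos hδ])
    calc ∑ k ∈ range N, ‖G.eval ((δ : ℂ) * ζ ^ k) * ζ ^ (k * (N - j))‖
        ≤ ∑ _k ∈ range N, B := Finset.sum_le_sum this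
      _ = N * B := by simp [mul_comm]
  have hNpos : (0 : ℝ) < N := by positivity
  rw [norm_mul, norm_mul, norm_pow, Complex.norm_natCast, Complex.norm_real,
    Real.norm_eq_abs, abs_of_pos hδ] at hbound
  exact (mul_le_mul_iff_right₀ hNpos).1 hbound



lemma aux_iterate_deriv_bound (f : Polynomial ℂ) (x : ℂ) {δ B : ℝ} (hδ : 0 < δ)
    (h : ∀ z : ℂ, ‖z - x‖ = δ → ‖f.eval z‖ ≤ B) (i : ℕ) :
    ‖((Polynomial.derivative)^[i] f).eval x‖ * δ ^ i ≤ i.factorial * B := by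
  have hG : ∀ u : ℂ, ‖u‖ = δ → ‖(Polynomial.taylor x f).eval u‖ ≤ B := by
    intro u hu
    rw [Polynomial.taylor_eval]
    exact h (u + x) (by simpa using hu)
  have hco := aux_coeff_bound (Polynomial.taylor x f) hδ hG i
  have hder : (Polynomial.derivative)^[i] f = i.factorial • (Polynomial.hasseDeriv i f) := by
    rw [← Polynomial.factorial_smul_hasseDeriv]
    rfl
  rw [hder]
  rw [Polynomial.taylor_coeff] at hco
  have heval : ((i.factorial • (Polynomial.hasseDeriv i f) : Polynomial ℂ)).eval x
      = (i.factorial : ℂ) * (Polynomial.hasseDeriv i f).eval x := by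
    simp [nsmul_eq_mul]
  rw [heval, norm_mul]
  calc ‖(i.factorial : ℂ)‖ * ‖(Polynomial.hasseDeriv i f).eval x‖ * δ ^ i
      = (i.factorial : ℝ) * (‖(Polynomial.hasseDeriv i f).eval x‖ * δ ^ i) := by
        rw [Complex.norm_natCast]; ring
    _ ≤ (i.factorial : ℝ) * B := by
        exact mul_le_mul_of_nonneg_left hco (by positivity)


noncomputable def qpoly (p : Polynomial ℂ) (b : ℝ) (n : ℕ) : Polynomial ℂ :=
  ∑ j ∈ Finset.range (n + 1),
    Polynomial.C (p.coeff j * ((b : ℂ) / 2) ^ j) * (Polynomial.X ^ 2 + 1) ^ j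
      * Polynomial.X ^ (n - j)

lemma qpoly_eval (p : Polynomial ℂ) (b : ℝ) {n : ℕ} (hdeg : p.natDegree ≤ n)
    {w : ℂ} (hw : w ≠ 0) :
    (qpoly p b n).eval w = w ^ n * p.eval ((b : ℂ) / 2 * (w + w⁻¹)) := by
  rw [qpoly, Polynomial.eval_finset_sum,
    Polynomial.eval_eq_sum_range' (lt_of_le_of_lt hdeg (Nat.lt_succ_self n)), Finset.mul_sum]
  refine Finset.sum_congr rfl fun j hj => ?_
  have hjn : j ≤ n := Nat.lt_succ_iff.mp (Finset.mem_range.1 hj)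
  simp only [Polynomial.eval_mul, Polynomial.eval_pow, Polynomial.eval_add,
    Polynomial.eval_one, Polynomial.eval_C, Polynomial.eval_X]
  have hwn : w ^ (n - j) = w ^ n / w ^ j := pow_sub₀ w hw hjn
  have hw2 : w + w⁻¹ = (w ^ 2 + 1) / w := by field_simp
  rw [hw2, hwn, mul_pow, div_pow]
  rw [div_pow]
  ring

lemma qpoly_recip (p : Polynomial ℂ) (b : ℝ) {n : ℕ} (hdeg : p.natDegree ≤ n)
    {w : ℂ} (hw : w ≠ 0) :
    (qpoly p b n).eval w = w ^ (2 * n) * (qpoly p b n).eval w⁻¹ := by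
  have h2 := qpoly_eval p b hdeg (inv_ne_zero hw)
  rw [inv_inv] at h2
  rw [qpoly_eval p b hdeg hw, h2]
  have hcomm : (b : ℂ) / 2 * (w⁻¹ + w) = (b : ℂ) / 2 * (w + w⁻¹) := by ring
  rw [hcomm, two_mul, pow_add, inv_pow]
  have hwn : (w : ℂ) ^ n ≠ 0 := pow_ne_zero n hw
  field_simp

lemma map_eval_real (p : Polynomial ℝ) (y : ℝ) :
    (p.map Complex.ofRealHom).eval ((y : ℝ) : ℂ) = ((p.eval y : ℝ) : ℂ) := by
  rw [Polynomial.eval_map]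
  exact Polynomial.eval₂_at_apply Complex.ofRealHom y

lemma qpoly_ball_bound {b : ℝ} (hb : 0 < b) (p : Polynomial ℝ) {n : ℕ}
    (hdeg : (p.map Complex.ofRealHom).natDegree ≤ n) {A : ℝ}
    (hA : ∀ y ∈ Set.Icc (-b) b, |p.eval y| ≤ A) :
    ∀ w : ℂ, ‖w‖ ≤ 1 → ‖(qpoly (p.map Complex.ofRealHom) b n).eval w‖ ≤ A := by
  have hsphere : ∀ w : ℂ, ‖w‖ = 1 →
      ‖(qpoly (p.map Complex.ofRealHom) b n).eval w‖ ≤ A := by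
    intro w hw1
    have hw0 : w ≠ 0 := by
      intro h; rw [h, norm_zero] at hw1; norm_num at hw1
    have hconj : w⁻¹ = (starRingEnd ℂ) w := by
      rw [Complex.inv_def, Complex.normSq_eq_norm_sq, hw1]
      simp
    have hreal : (b : ℂ) / 2 * (w + w⁻¹) = ((b * w.re : ℝ) : ℂ) := by
      rw [hconj, Complex.add_conj]
      push_cast
      ring
    rw [qpoly_eval _ b hdeg hw0, hreal, map_eval_real, norm_mul, norm_pow, hw1, one_pow,
      one_mul, Complex.norm_real, Real.norm_eq_abs]
    refine hA _ ⟨?_, ?_⟩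
    · have := Complex.abs_re_le_norm w
      rw [hw1] at this
      nlinarith [abs_le.1 this]
    · have := Complex.abs_re_le_norm w
      rw [hw1] at this
      nlinarith [abs_le.1 this]
  intro w hw
  have hU : Bornology.IsBounded (Metric.ball (0 : ℂ) 1) := Metric.isBounded_ball
  have hdiff : DiffContOnCl ℂ (fun w => (qpoly (p.map Complex.ofRealHom) b n).eval w)
      (Metric.ball 0 1) :=
    (Polynomial.differentiable _).diffContOnCl
  refine Complex.norm_le_of_forall_mem_frontier_norm_le hU hdiff (fun v hv => ?_) ?_
  · rw [frontier_ball (0 : ℂ) one_ne_zero, mem_sphere_iff_norm, sub_zero] at hv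
    exact hsphere v hv
  · rw [closure_ball (0 : ℂ) one_ne_zero]
    simpa [Metric.mem_closedBall, dist_zero_right] using hw

lemma qpoly_outside_bound {b : ℝ} (hb : 0 < b) (p : Polynomial ℝ) {n : ℕ}
    (hdeg : (p.map Complex.ofRealHom).natDegree ≤ n) {A : ℝ}
    (hA : ∀ y ∈ Set.Icc (-b) b, |p.eval y| ≤ A) :
    ∀ w : ℂ, 1 ≤ ‖w‖ → ‖(qpoly (p.map Complex.ofRealHom) b n).eval w‖ ≤ A * ‖w‖ ^ (2 * n) := by
  intro w hw
  have hw0 : w ≠ 0 := by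
    intro h; rw [h, norm_zero] at hw; norm_num at hw
  rw [qpoly_recip _ b hdeg hw0, norm_mul, norm_pow]
  have h1 : ‖w⁻¹‖ ≤ 1 := by
    rw [norm_inv]
    exact inv_le_one_of_one_le₀ hw
  have h2 := qpoly_ball_bound hb p hdeg hA w⁻¹ h1
  calc ‖w‖ ^ (2 * n) * ‖(qpoly (p.map Complex.ofRealHom) b n).eval w⁻¹‖
      ≤ ‖w‖ ^ (2 * n) * A := by
        exact mul_le_mul_of_nonneg_left h2 (by positivity)
    _ = A * ‖w‖ ^ (2 * n) := by ring

set_option maxHeartbeats 1000000 in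
lemma walsh_bound {b : ℝ} (hb : 0 < b) (p : Polynomial ℝ) {n : ℕ}
    (hdeg : p.natDegree ≤ n) {A : ℝ} (hA : ∀ y ∈ Set.Icc (-b) b, |p.eval y| ≤ A)
    {ρ : ℝ} (hρ : 1 < ρ) {z : ℂ}
    (hz : (z.re / b) ^ 2 + (z.im / (b * ((ρ - ρ⁻¹) / 2))) ^ 2 < 1) :
    ‖(p.map Complex.ofRealHom).eval z‖ ≤ A * ρ ^ n := by
  have hdegc : (p.map Complex.ofRealHom).natDegree ≤ n :=
    le_trans (Polynomial.natDegree_map_le) hdeg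
  have hA0 : 0 ≤ A := le_trans (abs_nonneg _)
    (hA 0 ⟨by linarith, by linarith⟩)
  set cρ : ℝ := (ρ - ρ⁻¹) / 2 with hcρ
  have hρpos : (0 : ℝ) < ρ := by linarith
  have hcρpos : 0 < cρ := by
    have : ρ⁻¹ < 1 := inv_lt_one_of_one_lt₀ hρ
    rw [hcρ]; linarith
  have main : ∀ w : ℂ, 1 ≤ ‖w‖ → ((b : ℂ) / 2) * (w + w⁻¹) = z →
      ‖(p.map Complex.ofRealHom).eval z‖ ≤ A * ρ ^ n := by
    intro w hw1 hzw
    have hw0 : w ≠ 0 := by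
      intro h; rw [h, norm_zero] at hw1; norm_num at hw1
    set R : ℝ := ‖w‖ with hRdef
    have hRpos : (0 : ℝ) < R := lt_of_lt_of_le one_pos hw1
    have hns : Complex.normSq w = R ^ 2 := by
      rw [Complex.normSq_eq_norm_sq]
    have hxy : w.re ^ 2 + w.im ^ 2 = R ^ 2 := by
      rw [← hns, Complex.normSq_apply]; ring
    have hzw' : (((b / 2 : ℝ)) : ℂ) * (w + w⁻¹) = z := by
      rw [← hzw]; push_cast; ring
    have hzre : z.re = b / 2 * (w.re + w.re / R ^ 2) := by
      rw [← hzw', Complex.re_ofReal_mul, Complex.add_re, Complex.inv_re, hns]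
    have hzim : z.im = b / 2 * (w.im - w.im / R ^ 2) := by
      rw [← hzw', Complex.im_ofReal_mul, Complex.add_im, Complex.inv_im, hns]
      ring
    have hzre2 : 2 * z.re * R ^ 2 = b * w.re * (R ^ 2 + 1) := by
      rw [hzre]; have hR2 : R ^ 2 ≠ 0 := by positivity
      have e : w.re / R ^ 2 * R ^ 2 = w.re := div_mul_cancel₀ _ hR2
      linear_combination b * e
    have hzim2 : 2 * z.im * R ^ 2 = b * w.im * (R ^ 2 - 1) := by
      rw [hzim]; have hR2 : R ^ 2 ≠ 0 := by positivity
      have e : w.im / R ^ 2 * R ^ 2 = w.im := div_mul_cancel₀ _ hR2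
      linear_combination (-b) * e
    have hRρ : R ≤ ρ := by
      by_contra hcon
      push_neg at hcon
      have h2ρ : 2 * ρ * cρ = ρ ^ 2 - 1 := by
        rw [hcρ]; field_simp
      have hfact1 : 4 * R ^ 2 ≤ (R ^ 2 + 1) ^ 2 := by nlinarith [sq_nonneg (R ^ 2 - 1)]
      have hfact2 : 2 * R * cρ ≤ R ^ 2 - 1 := by
        have hA1 : (0:ℝ) ≤ (R - ρ) * (ρ * R + 1) :=
          mul_nonneg (by linarith) (by nlinarith)
        have hA2 : ρ * (2 * R * cρ) = R * (2 * ρ * cρ) := by ring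
        have hA3 : ρ * (R ^ 2 - 1) - R * (ρ ^ 2 - 1) = (R - ρ) * (ρ * R + 1) := by ring
        have hA4 : R * (2 * ρ * cρ) = R * (ρ ^ 2 - 1) := by rw [h2ρ]
        have h5 : ρ * (2 * R * cρ) ≤ ρ * (R ^ 2 - 1) := by linarith
        exact (mul_le_mul_iff_right₀ hρpos).mp h5
      have hfact3 : 4 * R ^ 2 * cρ ^ 2 ≤ (R ^ 2 - 1) ^ 2 := by
        have h1 : (0:ℝ) ≤ 2 * R * cρ := by positivity
        nlinarith [mul_self_le_mul_self h1 hfact2]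
      have hkey : 4 * R ^ 4 * cρ ^ 2 ≤
          w.re ^ 2 * (R ^ 2 + 1) ^ 2 * cρ ^ 2 + w.im ^ 2 * (R ^ 2 - 1) ^ 2 := by
        have t1 := mul_le_mul_of_nonneg_left hfact1
          (mul_nonneg (sq_nonneg w.re) (sq_nonneg cρ))
        have t2 := mul_le_mul_of_nonneg_left hfact3 (sq_nonneg w.im)
        have t3 : w.re ^ 2 * cρ ^ 2 * (4 * R ^ 2) + w.im ^ 2 * (4 * R ^ 2 * cρ ^ 2)
            = 4 * R ^ 4 * cρ ^ 2 - (R ^ 2 - w.re ^ 2 - w.im ^ 2) * (4 * R ^ 2 * cρ ^ 2) := by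
          ring
        have t4 : R ^ 2 - w.re ^ 2 - w.im ^ 2 = 0 := by linarith
        rw [t4] at t3
        simp only [zero_mul, sub_zero] at t3
        calc 4 * R ^ 4 * cρ ^ 2
            = w.re ^ 2 * cρ ^ 2 * (4 * R ^ 2) + w.im ^ 2 * (4 * R ^ 2 * cρ ^ 2) := t3.symm
          _ ≤ w.re ^ 2 * cρ ^ 2 * (R ^ 2 + 1) ^ 2 + w.im ^ 2 * (R ^ 2 - 1) ^ 2 := by
              linarith
          _ = w.re ^ 2 * (R ^ 2 + 1) ^ 2 * cρ ^ 2 + w.im ^ 2 * (R ^ 2 - 1) ^ 2 := by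
              ring
      have hb2 : (0:ℝ) < b ^ 2 * cρ ^ 2 := by positivity
      have hzrw : (z.re / b) ^ 2 + (z.im / (b * cρ)) ^ 2
          = (z.re ^ 2 * cρ ^ 2 + z.im ^ 2) / (b ^ 2 * cρ ^ 2) := by
        field_simp
      rw [hzrw] at hz
      have hlt : z.re ^ 2 * cρ ^ 2 + z.im ^ 2 < b ^ 2 * cρ ^ 2 := by
        have := (div_lt_one hb2).mp hz
        linarith
      have e3 : z.re ^ 2 * (4 * R ^ 4) = b ^ 2 * (w.re ^ 2 * (R ^ 2 + 1) ^ 2) := by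
        linear_combination (2 * z.re * R ^ 2 + b * w.re * (R ^ 2 + 1)) * hzre2
      have e4 : z.im ^ 2 * (4 * R ^ 4) = b ^ 2 * (w.im ^ 2 * (R ^ 2 - 1) ^ 2) := by
        linear_combination (2 * z.im * R ^ 2 + b * w.im * (R ^ 2 - 1)) * hzim2
      have hcomb : (z.re ^ 2 * cρ ^ 2 + z.im ^ 2) * (4 * R ^ 4)
          = b ^ 2 * (w.re ^ 2 * (R ^ 2 + 1) ^ 2 * cρ ^ 2 + w.im ^ 2 * (R ^ 2 - 1) ^ 2) := by
        linear_combination cρ ^ 2 * e3 + e4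
      have s1 : b ^ 2 * (4 * R ^ 4 * cρ ^ 2)
          ≤ b ^ 2 * (w.re ^ 2 * (R ^ 2 + 1) ^ 2 * cρ ^ 2 + w.im ^ 2 * (R ^ 2 - 1) ^ 2) :=
        mul_le_mul_of_nonneg_left hkey (sq_nonneg b)
      have s2 : b ^ 2 * (4 * R ^ 4 * cρ ^ 2) = (b ^ 2 * cρ ^ 2) * (4 * R ^ 4) := by ring
      have s3 : (b ^ 2 * cρ ^ 2) * (4 * R ^ 4) ≤ (z.re ^ 2 * cρ ^ 2 + z.im ^ 2) * (4 * R ^ 4) := by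
        linarith
      have hge : b ^ 2 * cρ ^ 2 ≤ z.re ^ 2 * cρ ^ 2 + z.im ^ 2 :=
        le_of_mul_le_mul_right s3 (by positivity)
      linarith
    have hq := qpoly_outside_bound hb p hdegc hA w hw1
    rw [qpoly_eval _ b hdegc hw0, hzw, norm_mul, norm_pow] at hq
    have hRn : (0:ℝ) < R ^ n := by positivity
    have h2n : R ^ (2 * n) = R ^ n * R ^ n := by rw [two_mul, pow_add]
    rw [h2n] at hq
    have h3 : R ^ n * ‖(p.map Complex.ofRealHom).eval z‖ ≤ R ^ n * (A * R ^ n) := by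
      calc R ^ n * ‖(p.map Complex.ofRealHom).eval z‖ ≤ A * (R ^ n * R ^ n) := hq
        _ = R ^ n * (A * R ^ n) := by ring
    have h4 : ‖(p.map Complex.ofRealHom).eval z‖ ≤ A * R ^ n :=
      (mul_le_mul_iff_right₀ hRn).mp h3
    calc ‖(p.map Complex.ofRealHom).eval z‖ ≤ A * R ^ n := h4
      _ ≤ A * ρ ^ n :=
          mul_le_mul_of_nonneg_left (pow_le_pow_left₀ (le_of_lt hRpos) hRρ n) hA0
  obtain ⟨u, hu⟩ := IsAlgClosed.exists_pow_nat_eq ((z / (b:ℂ)) ^ 2 - 1) (n := 2) (by norm_num)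
  have hbne : (b : ℂ) ≠ 0 := by exact_mod_cast hb.ne'
  set w₁ : ℂ := z / b + u with hw₁
  set w₂ : ℂ := z / b - u with hw₂
  have hprod : w₁ * w₂ = 1 := by
    rw [hw₁, hw₂]
    linear_combination -hu
  have hnorm : ‖w₁‖ * ‖w₂‖ = 1 := by rw [← norm_mul, hprod, norm_one]
  have hsum : w₁ + w₂ = 2 * z / b := by rw [hw₁, hw₂]; ring
  rcases le_or_gt 1 ‖w₁‖ with h1 | h1
  · refine main w₁ h1 ?_
    rw [inv_eq_of_mul_eq_one_right hprod]
    rw [show w₁ + w₂ = 2 * z / b from hsum]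
    field_simp
  · have h2 : 1 ≤ ‖w₂‖ := by
      by_contra h2
      push_neg at h2
      nlinarith [norm_nonneg w₁, norm_nonneg w₂]
    refine main w₂ h2 ?_
    rw [inv_eq_of_mul_eq_one_right (by rw [mul_comm]; exact hprod)]
    rw [show w₂ + w₁ = 2 * z / b from by rw [add_comm]; exact hsum]
    field_simp


set_option maxHeartbeats 1000000 in
lemma bernstein_bound {b d : ℝ} (hb : 0 < b) (hd : 0 ≤ d) (hdb : d < b) (i : ℕ) :
    ∃ C : ℝ, 0 < C ∧ ∀ (p : Polynomial ℝ) (n : ℕ), 1 ≤ n → p.natDegree ≤ n →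
      ∀ A : ℝ, (∀ y ∈ Set.Icc (-b) b, |p.eval y| ≤ A) →
      ∀ x ∈ Set.Icc (-d) d, |((Polynomial.derivative)^[i] p).eval x|
        ≤ C * (n : ℝ) ^ i * A := by
  set t : ℝ := d / b with ht
  have ht0 : 0 ≤ t := div_nonneg hd hb.le
  have ht1 : t < 1 := (div_lt_one hb).mpr hdb
  set s : ℝ := (1 - t) / 2 with hs
  have hs0 : 0 < s := by rw [hs]; linarith
  clear_value t s
  refine ⟨i.factorial * 3 * (2 / (s * b)) ^ i, by positivity, ?_⟩
  intro p n hn hdeg A hA x hx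
  have hA0 : 0 ≤ A := le_trans (abs_nonneg _) (hA 0 ⟨by linarith, by linarith⟩)
  set nn : ℝ := (n : ℝ) with hnn
  clear_value nn
  have hnn1 : 1 ≤ nn := by rw [hnn]; exact_mod_cast hn
  have hnn0 : 0 < nn := by linarith
  set ρ : ℝ := 1 + 1 / nn with hρdef
  clear_value ρ
  have hρ : 1 < ρ := by rw [hρdef]; have := one_div_pos.mpr hnn0; linarith
  set cρ : ℝ := (ρ - ρ⁻¹) / 2 with hcρ
  clear_value cρ
  have hρpos : 0 < ρ := by linarith
  have hcρpos : 0 < cρ := by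
    have h1 : ρ⁻¹ < 1 := inv_lt_one_of_one_lt₀ hρ
    have h2 : ρ⁻¹ < ρ := lt_trans h1 hρ
    rw [hcρ]
    exact div_pos (sub_pos.mpr h2) two_pos
  have hcρ_ge : 1 / (2 * nn) ≤ cρ := by
    have h2 : ρ⁻¹ ≤ 1 := (inv_lt_one_of_one_lt₀ hρ).le
    have h3 : 1 / (2 * nn) = 1 / nn / 2 := by
      rw [div_div, mul_comm]
    have h4 : 1 / nn = ρ - 1 := by rw [hρdef]; ring
    rw [hcρ, h3, h4]
    linarith
  have hcρ_le : cρ ≤ 1 := by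
    have hρ2 : ρ ≤ 2 := by
      rw [hρdef]
      have : 1 / nn ≤ 1 := by
        rw [div_le_one hnn0]; exact hnn1
      linarith
    have : 0 < ρ⁻¹ := inv_pos.mpr hρpos
    rw [hcρ]; linarith
  set δ : ℝ := s * b * cρ with hδdef
  clear_value δ
  have hδpos : 0 < δ := by rw [hδdef]; exact mul_pos (mul_pos hs0 hb) hcρpos
  -- sphere bound
  have hsphere : ∀ z : ℂ, ‖z - (x : ℂ)‖ = δ → ‖(p.map Complex.ofRealHom).eval z‖ ≤ 3 * A := by
    intro z hz
    have hre : |z.re - x| ≤ δ := by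
      have : |(z - (x:ℂ)).re| ≤ ‖z - (x:ℂ)‖ := Complex.abs_re_le_norm _
      rw [hz] at this
      simpa using this
    have him : |z.im| ≤ δ := by
      have : |(z - (x:ℂ)).im| ≤ ‖z - (x:ℂ)‖ := Complex.abs_im_le_norm _
      rw [hz] at this
      simpa using this
    have hxd : |x| ≤ d := abs_le.mpr ⟨hx.1, hx.2⟩
    have hzre : |z.re| ≤ d + δ := by
      have := abs_sub_abs_le_abs_sub z.re x
      have h2 := abs_le.1 hre
      have h3 := abs_le.1 hxd
      rw [abs_le]
      constructor <;> nlinarith [abs_le.1 hre, abs_le.1 hxd, abs_nonneg z.re, le_abs_self z.re, neg_abs_le z.re]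
    have hellipse : (z.re / b) ^ 2 + (z.im / (b * cρ)) ^ 2 < 1 := by
      have h1 : (z.re / b) ^ 2 ≤ (t + s) ^ 2 := by
        have hδle : δ ≤ s * b := by
          calc δ = s * b * cρ := hδdef
            _ ≤ s * b * 1 := by exact mul_le_mul_of_nonneg_left hcρ_le (by positivity)
            _ = s * b := by ring
        have hnum : |z.re| / b ≤ t + s := by
          rw [div_le_iff₀ hb]
          calc |z.re| ≤ d + δ := hzre
            _ ≤ d + s * b := by linarith
            _ = (t + s) * b := by rw [ht]; field_simp
        have h0 : 0 ≤ |z.re| / b := by positivity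
        have := mul_self_le_mul_self h0 hnum
        calc (z.re / b) ^ 2 = (|z.re| / b) ^ 2 := by rw [div_pow, div_pow, sq_abs]
          _ ≤ (t + s) ^ 2 := by nlinarith
      have h2 : (z.im / (b * cρ)) ^ 2 ≤ s ^ 2 := by
        have hbcρ : 0 < b * cρ := by positivity
        have hnum : |z.im| / (b * cρ) ≤ s := by
          rw [div_le_iff₀ hbcρ]
          calc |z.im| ≤ δ := him
            _ = s * (b * cρ) := by rw [hδdef]; ring
        have h0 : 0 ≤ |z.im| / (b * cρ) := by positivity
        have := mul_self_le_mul_self h0 hnum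
        calc (z.im / (b * cρ)) ^ 2 = (|z.im| / (b * cρ)) ^ 2 := by
              rw [div_pow, div_pow, sq_abs]
          _ ≤ s ^ 2 := by nlinarith
      have h3 : (t + s) ^ 2 + s ^ 2 < 1 := by
        rw [hs]
        nlinarith [ht1, ht0]
      linarith
    rw [hcρ] at hellipse
    have hw := walsh_bound hb p hdeg hA hρ hellipse
    have hρn : ρ ^ n ≤ 3 := by
      have h1 : ρ ≤ Real.exp (1 / nn) := by
        have := Real.add_one_le_exp (1 / nn)
        rw [hρdef]; linarith
      have h2 : ρ ^ n ≤ Real.exp (1 / nn) ^ n :=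
        pow_le_pow_left₀ (by linarith) h1 n
      have h3 : Real.exp (1 / nn) ^ n = Real.exp ((n : ℝ) * (1 / nn)) := by
        rw [← Real.exp_nat_mul]
      have h4 : (n : ℝ) * (1 / nn) = 1 := by
        rw [hnn]; field_simp
      rw [h3, h4] at h2
      calc ρ ^ n ≤ Real.exp 1 := h2
        _ ≤ 3 := by linarith [Real.exp_one_lt_d9]
    calc ‖(p.map Complex.ofRealHom).eval z‖ ≤ A * ρ ^ n := hw
      _ ≤ A * 3 := mul_le_mul_of_nonneg_left hρn hA0
      _ = 3 * A := by ring
  -- apply the Cauchy estimate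
  have hC := aux_iterate_deriv_bound (p.map Complex.ofRealHom) (x : ℂ) hδpos hsphere i
  rw [Polynomial.iterate_derivative_map] at hC
  rw [map_eval_real] at hC
  rw [Complex.norm_real, Real.norm_eq_abs] at hC
  -- now pure real arithmetic
  set D : ℝ := |((Polynomial.derivative)^[i] p).eval x| with hD
  have hD0 : 0 ≤ D := abs_nonneg _
  set e : ℝ := s * b / (2 * nn) with he
  have he0 : 0 < e := by positivity
  have heδ : e ≤ δ := by
    rw [he, hδdef]
    calc s * b / (2 * nn) = s * b * (1 / (2 * nn)) := by ring
      _ ≤ s * b * cρ := mul_le_mul_of_nonneg_left hcρ_ge (by positivity)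
  have hDe : D * e ^ i ≤ (i.factorial : ℝ) * (3 * A) := by
    calc D * e ^ i ≤ D * δ ^ i :=
          mul_le_mul_of_nonneg_left (pow_le_pow_left₀ he0.le heδ i) hD0
      _ ≤ (i.factorial : ℝ) * (3 * A) := hC
  have hfinal : (i.factorial : ℝ) * 3 * (2 / (s * b)) ^ i * nn ^ i * A
      = ((i.factorial : ℝ) * (3 * A)) / e ^ i := by
    rw [he]
    rw [div_pow, div_pow]
    field_simp
    ring
  rw [← hnn] at *
  rw [hfinal]
  rw [le_div_iff₀ (by positivity)]
  exact hDe


lemma pow_rpow_comm (N : ℕ) (s : ℝ) : (((2:ℝ) ^ N : ℝ)) ^ s = ((2:ℝ) ^ s) ^ N := by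
  rw [← Real.rpow_natCast (2:ℝ) N, ← Real.rpow_mul (by norm_num), mul_comm,
    Real.rpow_mul (by norm_num), Real.rpow_natCast]

set_option maxHeartbeats 1000000 in
lemma core_contDiffOn {b d : ℝ} (hb : 0 < b) (hd : 0 ≤ d) (hdb : d < b)
    (r : ℕ) (M ε : ℝ) (hM : 0 < M) (hε : 0 < ε)
    (g : ℝ → ℝ) (hg : ContinuousOn g (Set.Icc (-b) b))
    (P : ℕ → Polynomial ℝ) (hdeg : ∀ n : ℕ, (P n).natDegree ≤ n)
    (happrox : ∀ n : ℕ, 1 ≤ n → ∀ x ∈ Set.Icc (-b) b,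
        |g x - (P n).eval x| ≤ M / (n : ℝ) ^ ((r : ℝ) + ε)) :
    ContDiffOn ℝ (r : ℕ∞) g (Set.Ioo (-d) d) := by
  have hsub : Set.Icc (-d) d ⊆ Set.Icc (-b) b :=
    Set.Icc_subset_Icc (by linarith) (by linarith)
  -- bound for g on [-b,b]
  obtain ⟨B, hB⟩ : ∃ B : ℝ, ∀ y ∈ Set.Icc (-b) b, |g y| ≤ B := by
    obtain ⟨B, hB⟩ := isCompact_Icc.exists_bound_of_continuousOn hg
    exact ⟨B, fun y hy => by simpa using hB y hy⟩
  have hB0 : 0 ≤ B := le_trans (abs_nonneg _) (hB 0 ⟨by linarith, by linarith⟩)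
  -- telescoping sequence
  set G : ℕ → Polynomial ℝ :=
    fun k => Nat.casesOn k (P 1) (fun j => P (2 ^ (j + 1)) - P (2 ^ j)) with hG
  have hG0 : G 0 = P 1 := rfl
  have hGs : ∀ j, G (j + 1) = P (2 ^ (j + 1)) - P (2 ^ j) := fun j => rfl
  -- casts
  have hcast : ∀ k : ℕ, ((2 ^ k : ℕ) : ℝ) = (2 : ℝ) ^ k := by
    intro k; push_cast; ring
  have h2k1 : ∀ k : ℕ, 1 ≤ 2 ^ k := fun k => Nat.one_le_two_pow
  -- sup-norm bound for G (k+1) on [-b,b]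
  have hGsup : ∀ k, ∀ y ∈ Set.Icc (-b) b,
      |(G (k + 1)).eval y| ≤ 2 * M / ((2:ℝ) ^ k) ^ ((r : ℝ) + ε) := by
    intro k y hy
    rw [hGs, Polynomial.eval_sub]
    have h1 := happrox (2 ^ k) (h2k1 k) y hy
    have h2 := happrox (2 ^ (k + 1)) (h2k1 (k + 1)) y hy
    rw [hcast] at h1 h2
    have hmono : M / ((2:ℝ) ^ (k+1)) ^ ((r : ℝ) + ε) ≤ M / ((2:ℝ) ^ k) ^ ((r : ℝ) + ε) := by
      apply div_le_div_of_nonneg_left hM.le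
      · apply Real.rpow_pos_of_pos; positivity
      · apply Real.rpow_le_rpow (by positivity)
        · exact pow_le_pow_right₀ (by norm_num) (by omega)
        · positivity
    calc |(P (2 ^ (k + 1))).eval y - (P (2 ^ k)).eval y|
        = |(g y - (P (2 ^ k)).eval y) - (g y - (P (2 ^ (k+1))).eval y)| := by ring_nf
      _ ≤ |g y - (P (2 ^ k)).eval y| + |g y - (P (2 ^ (k+1))).eval y| := abs_sub _ _
      _ ≤ M / ((2:ℝ) ^ k) ^ ((r : ℝ) + ε) + M / ((2:ℝ) ^ k) ^ ((r : ℝ) + ε) := by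
          have := le_trans h2 hmono
          linarith
      _ = 2 * M / ((2:ℝ) ^ k) ^ ((r : ℝ) + ε) := by ring
  -- sup-norm bound for G 0
  have hG0sup : ∀ y ∈ Set.Icc (-b) b, |(G 0).eval y| ≤ B + M := by
    intro y hy
    rw [hG0]
    have h1 := happrox 1 le_rfl y hy
    have h2 := hB y hy
    have h3 : ((1:ℕ) : ℝ) ^ ((r : ℝ) + ε) = 1 := by
      rw [Nat.cast_one, Real.one_rpow]
    rw [h3, div_one] at h1
    calc |(P 1).eval y| = |g y - (g y - (P 1).eval y)| := by ring_nf
      _ ≤ |g y| + |g y - (P 1).eval y| := abs_sub _ _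
      _ ≤ B + M := add_le_add h2 h1
  -- degree bounds
  have hGdeg : ∀ k, (G (k + 1)).natDegree ≤ 2 ^ (k + 1) := by
    intro k
    rw [hGs]
    refine le_trans (Polynomial.natDegree_sub_le _ _) (max_le (hdeg _) ?_)
    exact le_trans (hdeg _) (Nat.pow_le_pow_right (by norm_num) (by omega))
  -- telescoping identity
  have htele : ∀ (i N : ℕ) (x : ℝ),
      ∑ k ∈ Finset.range (N + 1), ((Polynomial.derivative)^[i] (G k)).eval x
        = ((Polynomial.derivative)^[i] (P (2 ^ N))).eval x := by
    intro i N x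
    induction N with
    | zero => simp [hG0]
    | succ N ih =>
        rw [Finset.sum_range_succ, ih, hGs, Polynomial.iterate_derivative_sub,
          Polynomial.eval_sub]
        ring
  -- the limit functions
  set F : ℕ → ℝ → ℝ :=
    fun i x => ∑' k, ((Polynomial.derivative)^[i] (G k)).eval x with hF
  -- uniform convergence
  have huniform : ∀ i, i ≤ r →
      TendstoUniformlyOn (fun N x => ((Polynomial.derivative)^[i] (P (2 ^ N))).eval x)
        (F i) Filter.atTop (Set.Icc (-d) d) := by
    intro i hi
    obtain ⟨C, hC0, hCb⟩ := bernstein_bound hb hd hdb i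
    set q : ℝ := (2:ℝ) ^ (i : ℝ) / (2:ℝ) ^ ((r : ℝ) + ε) with hq
    have hq0 : 0 < q := by
      apply div_pos <;> exact Real.rpow_pos_of_pos (by norm_num) _
    have hq1 : q < 1 := by
      rw [hq, div_lt_one (Real.rpow_pos_of_pos (by norm_num) _)]
      apply Real.rpow_lt_rpow_of_exponent_lt (by norm_num)
      have : (i : ℝ) ≤ (r : ℝ) := by exact_mod_cast hi
      linarith
    set u : ℕ → ℝ :=
      fun k => Nat.casesOn k (C * (B + M)) (fun j => C * 2 ^ i * (2 * M) * q ^ j) with hu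
    have husum : Summable u := by
      apply (summable_nat_add_iff 1).mp
      have : Summable (fun j : ℕ => (C * 2 ^ i * (2 * M)) * q ^ j) :=
        (summable_geometric_of_lt_one hq0.le hq1).mul_left _
      exact this.congr fun j => rfl
    have hbound : ∀ k, ∀ x ∈ Set.Icc (-d) d,
        ‖((Polynomial.derivative)^[i] (G k)).eval x‖ ≤ u k := by
      intro k x hx
      rw [Real.norm_eq_abs]
      cases k with
      | zero =>
          have := hCb (G 0) 1 le_rfl (le_trans (by rw [hG0]; exact hdeg 1) le_rfl)
            (B + M) hG0sup x hx
          calc |((Polynomial.derivative)^[i] (G 0)).eval x|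
              ≤ C * ((1:ℕ) : ℝ) ^ i * (B + M) := this
            _ = C * (B + M) := by norm_num
      | succ k =>
          have hb1 : 1 ≤ 2 ^ (k + 1) := h2k1 (k + 1)
          have := hCb (G (k + 1)) (2 ^ (k + 1)) hb1 (hGdeg k)
            (2 * M / ((2:ℝ) ^ k) ^ ((r : ℝ) + ε)) (hGsup k) x hx
          refine le_trans this ?_
          rw [hcast]
          have heq : C * ((2:ℝ) ^ (k + 1)) ^ i * (2 * M / ((2:ℝ) ^ k) ^ ((r : ℝ) + ε))
              = C * 2 ^ i * (2 * M) * q ^ k := by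
            rw [hq, pow_rpow_comm k ((r : ℝ) + ε), div_pow]
            have h2i : ((2:ℝ) ^ (i : ℝ)) ^ k = ((2:ℝ) ^ i) ^ k := by
              rw [Real.rpow_natCast]
            rw [h2i]
            have hpow : ((2:ℝ) ^ (k + 1)) ^ i = 2 ^ i * ((2:ℝ) ^ i) ^ k := by
              rw [← pow_mul, ← pow_mul]
              ring_nf
            rw [hpow]
            have hne : ((2:ℝ) ^ ((r : ℝ) + ε)) ^ k ≠ 0 :=
              pow_ne_zero _ (Real.rpow_pos_of_pos (by norm_num) _).ne'
            field_simp
          rw [heq]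
    have key := tendstoUniformlyOn_tsum_nat husum hbound
    have shift : TendstoUniformlyOn
        (fun N x => ∑ k ∈ Finset.range (N + 1), ((Polynomial.derivative)^[i] (G k)).eval x)
        (F i) Filter.atTop (Set.Icc (-d) d) := by
      intro v hv
      exact (tendsto_add_atTop_nat 1).eventually (key v hv)
    have hfun : (fun (N : ℕ) (x : ℝ) =>
        ∑ k ∈ Finset.range (N + 1), ((Polynomial.derivative)^[i] (G k)).eval x)
        = fun N x => ((Polynomial.derivative)^[i] (P (2 ^ N))).eval x := by
      funext N x
      exact htele i N x
    rwa [hfun] at shift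
  -- pointwise limit of P (2^N) is g
  have hgF0 : ∀ x ∈ Set.Icc (-d) d, g x = F 0 x := by
    intro x hx
    have h1 : Filter.Tendsto (fun N : ℕ => (P (2 ^ N)).eval x) Filter.atTop (nhds (g x)) := by
      rw [tendsto_iff_norm_sub_tendsto_zero]
      apply squeeze_zero (g := fun N : ℕ => M / ((2:ℝ) ^ N) ^ ((r : ℝ) + ε))
        (fun N => norm_nonneg _)
      · intro N
        have := happrox (2 ^ N) (h2k1 N) x (hsub hx)
        rw [hcast] at this
        rw [Real.norm_eq_abs, abs_sub_comm]
        exact this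
      · have heq : (fun N : ℕ => M / ((2:ℝ) ^ N) ^ ((r : ℝ) + ε))
            = fun N : ℕ => M * (((2:ℝ) ^ ((r : ℝ) + ε))⁻¹) ^ N := by
          funext N
          rw [pow_rpow_comm, div_eq_mul_inv, inv_pow]
        rw [heq]
        have hlt : ((2:ℝ) ^ ((r : ℝ) + ε))⁻¹ < 1 := by
          rw [inv_lt_one_iff₀]
          right
          rw [Real.one_lt_rpow_iff_of_pos (by norm_num)]
          exact Or.inl ⟨by norm_num, by positivity⟩
        have hge : 0 ≤ ((2:ℝ) ^ ((r : ℝ) + ε))⁻¹ :=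
          inv_nonneg.mpr (Real.rpow_pos_of_pos (by norm_num) _).le
        have := tendsto_pow_atTop_nhds_zero_of_lt_one hge hlt
        simpa using this.const_mul M
    have h2 : Filter.Tendsto (fun N : ℕ => (P (2 ^ N)).eval x) Filter.atTop (nhds (F 0 x)) := by
      have := (huniform 0 (Nat.zero_le r)).tendsto_at hx
      simpa using this
    exact tendsto_nhds_unique h1 h2
  -- derivatives
  have hderiv : ∀ i, i < r → ∀ x ∈ Set.Ioo (-d) d, HasDerivAt (F i) (F (i + 1) x) x := by
    intro i hi x hx
    apply hasDerivAt_of_tendstoUniformlyOn isOpen_Ioo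
      ((huniform (i + 1) (by omega)).mono Set.Ioo_subset_Icc_self)
    · apply Filter.Eventually.of_forall
      intro N y hy
      have h1 : HasDerivAt (fun x => ((Polynomial.derivative)^[i] (P (2 ^ N))).eval x)
          ((((Polynomial.derivative)^[i] (P (2 ^ N))).derivative).eval y) y :=
        Polynomial.hasDerivAt _ y
      rwa [← Function.iterate_succ_apply' Polynomial.derivative i] at h1
    · intro y hy
      exact (huniform i hi.le).tendsto_at (Set.Ioo_subset_Icc_self hy)
    · exact hx
  -- continuity
  have hcont : ∀ i, i ≤ r → ContinuousOn (F i) (Set.Icc (-d) d) := by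
    intro i hi
    apply (huniform i hi).continuousOn
    apply Filter.Frequently.of_forall
    intro N
    exact (Polynomial.continuous _).continuousOn
  -- induction on smoothness order
  have main : ∀ m i : ℕ, i + m ≤ r → ContDiffOn ℝ (m : ℕ∞) (F i) (Set.Ioo (-d) d) := by
    intro m
    induction m with
    | zero =>
        intro i hi
        norm_cast
        rw [contDiffOn_zero]
        exact ((hcont i (by omega)).mono Set.Ioo_subset_Icc_self)
    | succ m ih =>
        intro i hi
        have hcast2 : ContDiffOn ℝ (((m + 1 : ℕ)) : ℕ∞) (F i) (Set.Ioo (-d) d)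
            ↔ ContDiffOn ℝ (((m : ℕ∞) : WithTop ℕ∞) + 1) (F i) (Set.Ioo (-d) d) := by
          norm_cast
        rw [hcast2, contDiffOn_succ_iff_deriv_of_isOpen isOpen_Ioo]
        refine ⟨?_, ?_, ?_⟩
        · intro x hx
          exact (hderiv i (by omega) x hx).differentiableAt.differentiableWithinAt
        · intro h
          simp at h
        · refine ContDiffOn.congr (ih (i + 1) (by omega)) ?_
          intro x hx
          exact (hderiv i (by omega) x hx).deriv
  have hmain := main r 0 (by omega)
  refine ContDiffOn.congr hmain ?_
  intro x hx
  exact hgF0 x (Set.Ioo_subset_Icc_self hx)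

/-- Inverse approximation theorem (analytic core): if `h̃ ∈ C[-b,b]` and there
are polynomials `P_n` of degree `≤ n` with `‖h̃ - P_n‖_∞ ≤ M̃/n^{r+ε}` for all
`n ≥ 1`, then `h̃ ∈ C^r(-b,b)`. -/
theorem stmt_19 (b : ℝ) (hb : 0 < b) (r : ℕ) (M ε : ℝ) (hM : 0 < M) (hε : 0 < ε)
    (g : ℝ → ℝ) (hg : ContinuousOn g (Set.Icc (-b) b))
    (P : ℕ → Polynomial ℝ) (hdeg : ∀ n : ℕ, (P n).natDegree ≤ n)
    (happrox : ∀ n : ℕ, 1 ≤ n → ∀ x ∈ Set.Icc (-b) b,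
        |g x - (P n).eval x| ≤ M / (n : ℝ) ^ ((r : ℝ) + ε)) :
    ContDiffOn ℝ (r : ℕ∞) g (Set.Ioo (-b) b) := by
  apply contDiffOn_of_locally_contDiffOn
  intro x hx
  obtain ⟨hx1, hx2⟩ := hx
  set d : ℝ := (|x| + b) / 2 with hddef
  have hxb : |x| < b := abs_lt.mpr ⟨hx1, hx2⟩
  have hd0 : 0 ≤ d := by rw [hddef]; positivity
  have hxd : |x| < d := by rw [hddef]; linarith
  have hdb : d < b := by rw [hddef]; linarith
  refine ⟨Set.Ioo (-d) d, isOpen_Ioo, ?_, ?_⟩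
  · exact abs_lt.mp hxd
  · exact (core_contDiffOn hb hd0 hdb r M ε hM hε g hg P hdeg happrox).mono
      Set.inter_subset_right
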